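/- Let G be the graph on {0,1}^5 where distinct u, v are adjacent iff 1 ≤ d_H(u,v) ≤ 2. Then the independence number of the strong product G ⊠ G is at least 20. -/

import Mathlib

open SimpleGraph

def gilbert : SimpleGraph (Fin 5 → Bool) where
  Adj u v := 1 ≤ hammingDist u v ∧ hammingDist u v ≤ 2
  symm := ⟨fun u v h => ⟨hammingDist_comm v u ▸ h.1, hammingDist_comm v u ▸ h.2⟩⟩
  loopless := ⟨fun u h => by simpa [hammingDist_self] using h.1⟩

instance : DecidableRel gilbert.Adj :=
  fun u v => inferInstanceAs (Decidable (1 ≤ hammingDist u v ∧ hammingDist u v ≤ 2))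
/-- A set of vertices is independent if no two of its elements are adjacent. -/
def IsIndep {V : Type*} (G : SimpleGraph V) (s : Set V) : Prop :=
  s.Pairwise fun u v => ¬ G.Adj u v

/-- The independence number: the largest size of an independent set. -/
noncomputable def indepNum {V : Type*} [Fintype V] (G : SimpleGraph V) : ℕ :=
  sSup {n | ∃ s : Finset V, IsIndep G ↑s ∧ s.card = n}
/-- The strong product of two simple graphs. -/
def strongProd {V W : Type*} (G : SimpleGraph V) (H : SimpleGraph W) : SimpleGraph (V × W) where
  Adj a b := a ≠ b ∧ (a.1 = b.1 ∨ G.Adj a.1 b.1) ∧ (a.2 = b.2 ∨ H.Adj a.2 b.2)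
  symm := ⟨fun a b h => ⟨fun e => h.1 e.symm, (h.2.1).imp Eq.symm (fun hadj => G.adj_symm hadj),
    (h.2.2).imp Eq.symm (fun hadj => H.adj_symm hadj)⟩⟩
  loopless := ⟨fun a h => h.1 rfl⟩

def vtx (n : ℕ) : Fin 5 → Bool := fun i => n.testBit i

def indepList : List ((Fin 5 → Bool) × (Fin 5 → Bool)) :=
  [(vtx 3, vtx 18), (vtx 5, vtx 28), (vtx 6, vtx 5), (vtx 7, vtx 11), (vtx 9, vtx 7), (vtx 10, vtx 25), (vtx 11, vtx 12), (vtx 12, vtx 10), (vtx 13, vtx 17), (vtx 14, vtx 22), (vtx 17, vtx 9), (vtx 18, vtx 14), (vtx 19, vtx 21), (vtx 20, vtx 19), (vtx 21, vtx 6), (vtx 22, vtx 24), (vtx 24, vtx 20), (vtx 25, vtx 26), (vtx 26, vtx 3), (vtx 28, vtx 13)]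

instance : DecidableRel (strongProd gilbert gilbert).Adj := fun a b =>
  inferInstanceAs (Decidable (_ ∧ _))

set_option maxRecDepth 40000 in
lemma indepList_nodup : indepList.Nodup := by decide

set_option maxRecDepth 40000 in
lemma indepList_pairwise :
    indepList.Pairwise (fun a b => ¬ (strongProd gilbert gilbert).Adj a b) := by decide

lemma indepList_card : indepList.toFinset.card = 20 := by
  rw [List.toFinset_card_of_nodup indepList_nodup]; rfl

lemma indepList_indep : IsIndep (strongProd gilbert gilbert) ↑indepList.toFinset := by
  intro a ha b hb hab
  have hs : Symmetric (fun a b => ¬ (strongProd gilbert gilbert).Adj a b) :=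
    fun x y h hadj => h (SimpleGraph.adj_symm _ hadj)
  haveI : Std.Symm (fun a b => ¬ (strongProd gilbert gilbert).Adj a b) := ⟨fun x y h => hs h⟩
  exact indepList_pairwise.forall (by simpa using ha) (by simpa using hb) hab

theorem stmt6 : 20 ≤ _root_.indepNum (strongProd gilbert gilbert) := by
  have hb : BddAbove {n | ∃ s : Finset ((Fin 5 → Bool) × (Fin 5 → Bool)),
      IsIndep (strongProd gilbert gilbert) ↑s ∧ s.card = n} := by
    refine ⟨Fintype.card ((Fin 5 → Bool) × (Fin 5 → Bool)), ?_⟩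
    rintro n ⟨s, -, rfl⟩
    exact s.card_le_univ.trans_eq rfl
  exact le_csSup hb ⟨indepList.toFinset, indepList_indep, indepList_card⟩
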